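/- In the Moore collection C of cut-free-closed sets of bunches: if Y is closed then X —• Y = {Δ | ∀Δ' ∈ X, (Δ , Δ') ∈ Y} is closed; in fact, writing Y = ⋂ⱼ ⟦φⱼ⟧, one has X —• Y = ⋂ over (Δ', j) ∈ X × J of ⟦⟨Δ'⟩ -* φⱼ⟧. -/
import Mathlib


/-- Formulas of BI. -/
inductive Frml : Type
  | atom : Nat → Frml
  | top : Frml
  | bot : Frml
  | emp : Frml
  | and : Frml → Frml → Frml
  | or : Frml → Frml → Frml
  | imp : Frml → Frml → Frml
  | sep : Frml → Frml → Frml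
  | wand : Frml → Frml → Frml

/-- Bunches: trees with formula leaves, multiplicative/additive units and nodes. -/
inductive Bunch : Type
  | frml : Frml → Bunch
  | mempty : Bunch    -- ∅ₘ
  | aempty : Bunch    -- ∅ₐ
  | comma : Bunch → Bunch → Bunch   -- multiplicative ','
  | semic : Bunch → Bunch → Bunch   -- additive ';'

/-- Bunched contexts: bunches with a single hole. -/
inductive BCtx : Type
  | hole : BCtx
  | commaL : BCtx → Bunch → BCtx
  | commaR : Bunch → BCtx → BCtx
  | semicL : BCtx → Bunch → BCtx
  | semicR : Bunch → BCtx → BCtx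

/-- Filling the hole of a bunched context with a bunch. -/
def BCtx.fill : BCtx → Bunch → Bunch
  | .hole, Δ => Δ
  | .commaL C Γ, Δ => .comma (C.fill Δ) Γ
  | .commaR Γ C, Δ => .comma Γ (C.fill Δ)
  | .semicL C Γ, Δ => .semic (C.fill Δ) Γ
  | .semicR Γ C, Δ => .semic Γ (C.fill Δ)

/-- Equivalence of bunches: commutative-monoid laws for (',', ∅ₘ) and (';', ∅ₐ),
under arbitrary bunched contexts. -/
inductive BEquiv : Bunch → Bunch → Prop
  | refl (Δ : Bunch) : BEquiv Δ Δ
  | symm {Δ Δ' : Bunch} : BEquiv Δ Δ' → BEquiv Δ' Δ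
  | trans {Δ₁ Δ₂ Δ₃ : Bunch} : BEquiv Δ₁ Δ₂ → BEquiv Δ₂ Δ₃ → BEquiv Δ₁ Δ₃
  | commaComm (Δ₁ Δ₂ : Bunch) : BEquiv (.comma Δ₁ Δ₂) (.comma Δ₂ Δ₁)
  | semicComm (Δ₁ Δ₂ : Bunch) : BEquiv (.semic Δ₁ Δ₂) (.semic Δ₂ Δ₁)
  | commaAssoc (Δ₁ Δ₂ Δ₃ : Bunch) :
      BEquiv (.comma Δ₁ (.comma Δ₂ Δ₃)) (.comma (.comma Δ₁ Δ₂) Δ₃)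
  | semicAssoc (Δ₁ Δ₂ Δ₃ : Bunch) :
      BEquiv (.semic Δ₁ (.semic Δ₂ Δ₃)) (.semic (.semic Δ₁ Δ₂) Δ₃)
  | commaUnit (Δ : Bunch) : BEquiv (.comma Δ .mempty) Δ
  | semicUnit (Δ : Bunch) : BEquiv (.semic Δ .aempty) Δ
  | ctx (C : BCtx) {Δ Δ' : Bunch} : BEquiv Δ Δ' → BEquiv (C.fill Δ) (C.fill Δ')

/-- Cut-free sequent calculus for BI, with the axiom rule restricted to atoms. -/
inductive Proves : Bunch → Frml → Prop
  | ax (a : Nat) : Proves (.frml (.atom a)) (.atom a)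
  | equiv {Δ Δ' : Bunch} {φ : Frml} :
      Proves Δ' φ → BEquiv Δ Δ' → Proves Δ φ
  | weaken (C : BCtx) {Δ₁ Δ₂ : Bunch} {φ : Frml} :
      Proves (C.fill Δ₁) φ → Proves (C.fill (.semic Δ₁ Δ₂)) φ
  | contract (C : BCtx) {Δ₁ : Bunch} {φ : Frml} :
      Proves (C.fill (.semic Δ₁ Δ₁)) φ → Proves (C.fill Δ₁) φ
  | empR : Proves .mempty .emp
  | empL (C : BCtx) {φ : Frml} :
      Proves (C.fill .mempty) φ → Proves (C.fill (.frml .emp)) φ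
  | sepR {Δ₁ Δ₂ : Bunch} {φ ψ : Frml} :
      Proves Δ₁ φ → Proves Δ₂ ψ → Proves (.comma Δ₁ Δ₂) (.sep φ ψ)
  | sepL (C : BCtx) {φ ψ χ : Frml} :
      Proves (C.fill (.comma (.frml φ) (.frml ψ))) χ →
      Proves (C.fill (.frml (.sep φ ψ))) χ
  | wandR {Δ : Bunch} {φ ψ : Frml} :
      Proves (.comma Δ (.frml φ)) ψ → Proves Δ (.wand φ ψ)
  | wandL (C : BCtx) {Δ₁ Δ₂ : Bunch} {φ ψ χ : Frml} :
      Proves Δ₁ φ → Proves (C.fill (.comma Δ₂ (.frml ψ))) χ →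
      Proves (C.fill (.comma (.comma Δ₁ Δ₂) (.frml (.wand φ ψ)))) χ
  | topR : Proves .aempty .top
  | topL (C : BCtx) {φ : Frml} :
      Proves (C.fill .aempty) φ → Proves (C.fill (.frml .top)) φ
  | andR {Δ₁ Δ₂ : Bunch} {φ ψ : Frml} :
      Proves Δ₁ φ → Proves Δ₂ ψ → Proves (.semic Δ₁ Δ₂) (.and φ ψ)
  | andL (C : BCtx) {φ ψ χ : Frml} :
      Proves (C.fill (.semic (.frml φ) (.frml ψ))) χ →
      Proves (C.fill (.frml (.and φ ψ))) χ
  | impR {Δ : Bunch} {φ ψ : Frml} :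
      Proves (.semic Δ (.frml φ)) ψ → Proves Δ (.imp φ ψ)
  | impL (C : BCtx) {Δ₁ Δ₂ : Bunch} {φ ψ χ : Frml} :
      Proves Δ₁ φ → Proves (C.fill (.semic Δ₂ (.frml ψ))) χ →
      Proves (C.fill (.semic (.semic Δ₁ Δ₂) (.frml (.imp φ ψ)))) χ
  | botL (C : BCtx) {φ : Frml} : Proves (C.fill (.frml .bot)) φ
  | orR1 {Δ : Bunch} {φ ψ : Frml} : Proves Δ φ → Proves Δ (.or φ ψ)
  | orR2 {Δ : Bunch} {φ ψ : Frml} : Proves Δ ψ → Proves Δ (.or φ ψ)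
  | orL (C : BCtx) {φ ψ χ : Frml} :
      Proves (C.fill (.frml φ)) χ → Proves (C.fill (.frml ψ)) χ →
      Proves (C.fill (.frml (.or φ ψ))) χ

/-- The formula collapse `⟨Δ⟩` of a bunch. -/
def Bunch.collapse : Bunch → Frml
  | .frml φ => φ
  | .mempty => .emp
  | .aempty => .top
  | .comma Δ₁ Δ₂ => .sep Δ₁.collapse Δ₂.collapse
  | .semic Δ₁ Δ₂ => .and Δ₁.collapse Δ₂.collapse

/-- The principal closed set `⟦φ⟧ = {Δ | Δ ⊢cf φ}`. -/
def pr (φ : Frml) : Set Bunch := {Δ | Proves Δ φ}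

/-- The Moore closure generated by the principal sets:
`cl X = ⋂ {⟦φ⟧ | X ⊆ ⟦φ⟧}`. -/
def clB (X : Set Bunch) : Set Bunch := ⋂₀ {Y | ∃ φ : Frml, Y = pr φ ∧ X ⊆ Y}

/-- A set of bunches is closed if it is a fixpoint of the closure operator. -/
def ClosedB (X : Set Bunch) : Prop := clB X = X

/-- `X —• Y` on sets of bunches. -/
def wandSet (X Y : Set Bunch) : Set Bunch :=
  {Δ | ∀ Δ' ∈ X, Bunch.comma Δ Δ' ∈ Y}

deriving instance DecidableEq for Frml

/-- Composition of bunched contexts. -/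
def BCtx.comp : BCtx → BCtx → BCtx
  | .hole, D => D
  | .commaL C Γ, D => .commaL (C.comp D) Γ
  | .commaR Γ C, D => .commaR Γ (C.comp D)
  | .semicL C Γ, D => .semicL (C.comp D) Γ
  | .semicR Γ C, D => .semicR Γ (C.comp D)

theorem BCtx.fill_comp (C D : BCtx) (Δ : Bunch) :
    (C.comp D).fill Δ = C.fill (D.fill Δ) := by
  induction C <;> simp [BCtx.comp, BCtx.fill, *]

/-- Substitution on bunches: replace every leaf `frml θ` by `Δ₀`. -/
def bsub (θ : Frml) (Δ₀ : Bunch) : Bunch → Bunch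
  | .frml φ => if φ = θ then Δ₀ else .frml φ
  | .mempty => .mempty
  | .aempty => .aempty
  | .comma a b => .comma (bsub θ Δ₀ a) (bsub θ Δ₀ b)
  | .semic a b => .semic (bsub θ Δ₀ a) (bsub θ Δ₀ b)

/-- Substitution on contexts. -/
def csub (θ : Frml) (Δ₀ : Bunch) : BCtx → BCtx
  | .hole => .hole
  | .commaL C Γ => .commaL (csub θ Δ₀ C) (bsub θ Δ₀ Γ)
  | .commaR Γ C => .commaR (bsub θ Δ₀ Γ) (csub θ Δ₀ C)
  | .semicL C Γ => .semicL (csub θ Δ₀ C) (bsub θ Δ₀ Γ)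
  | .semicR Γ C => .semicR (bsub θ Δ₀ Γ) (csub θ Δ₀ C)

theorem fill_sub (θ : Frml) (Δ₀ : Bunch) (C : BCtx) (Δ : Bunch) :
    bsub θ Δ₀ (C.fill Δ) = (csub θ Δ₀ C).fill (bsub θ Δ₀ Δ) := by
  induction C <;> simp [BCtx.fill, csub, bsub, *]

theorem bequiv_sub {θ : Frml} {Δ₀ : Bunch} {Δ Δ' : Bunch} (h : BEquiv Δ Δ') :
    BEquiv (bsub θ Δ₀ Δ) (bsub θ Δ₀ Δ') := by
  induction h with
  | refl => exact .refl _
  | symm _ ih => exact ih.symm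
  | trans _ _ ih₁ ih₂ => exact ih₁.trans ih₂
  | commaComm => exact .commaComm _ _
  | semicComm => exact .semicComm _ _
  | commaAssoc => exact .commaAssoc _ _ _
  | semicAssoc => exact .semicAssoc _ _ _
  | commaUnit Δ => exact .commaUnit _
  | semicUnit Δ => exact .semicUnit _
  | ctx C _ ih => rw [fill_sub, fill_sub]; exact .ctx _ ih

/-- Easy direction: a bunch may be replaced by its formula collapse on the left. -/
theorem collapseL (Δ : Bunch) : ∀ (C : BCtx) {χ : Frml},
    Proves (C.fill Δ) χ → Proves (C.fill (.frml Δ.collapse)) χ := by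
  induction Δ with
  | frml φ => intro C χ h; exact h
  | mempty => intro C χ h; exact .empL C h
  | aempty => intro C χ h; exact .topL C h
  | comma Δ₁ Δ₂ ih₁ ih₂ =>
      intro C χ h
      apply Proves.sepL C
      have h2 := ih₂ (C.comp (.commaR Δ₁ .hole))
        (by rw [BCtx.fill_comp]; exact h)
      rw [BCtx.fill_comp] at h2
      have h1 := ih₁ (C.comp (.commaL .hole (.frml Δ₂.collapse)))
        (by rw [BCtx.fill_comp]; exact h2)
      rw [BCtx.fill_comp] at h1
      exact h1
  | semic Δ₁ Δ₂ ih₁ ih₂ =>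
      intro C χ h
      apply Proves.andL C
      have h2 := ih₂ (C.comp (.semicR Δ₁ .hole))
        (by rw [BCtx.fill_comp]; exact h)
      rw [BCtx.fill_comp] at h2
      have h1 := ih₁ (C.comp (.semicL .hole (.frml Δ₂.collapse)))
        (by rw [BCtx.fill_comp]; exact h2)
      rw [BCtx.fill_comp] at h1
      exact h1

theorem unsub_leaf {θ : Frml} {Δ₀ : Bunch} (hcol : Δ₀.collapse = θ)
    (C : BCtx) (φ : Frml) {χ : Frml}
    (h : Proves (C.fill (bsub θ Δ₀ (.frml φ))) χ) : Proves (C.fill (.frml φ)) χ := by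
  by_cases hφ : φ = θ
  · subst hφ
    simp only [bsub, if_pos rfl] at h
    have := collapseL Δ₀ C h
    rwa [hcol] at this
  · simpa only [bsub, if_neg hφ] using h

theorem bsub_frml_eq (θ : Frml) (Δ₀ : Bunch) : bsub θ Δ₀ (.frml θ) = Δ₀ := by
  simp [bsub]

theorem bsub_frml_ne {θ φ : Frml} (Δ₀ : Bunch) (h : φ ≠ θ) :
    bsub θ Δ₀ (.frml φ) = .frml φ := by
  simp [bsub, h]

theorem subst_proves {θ : Frml} {Δ₀ : Bunch}
    (hcol : Δ₀.collapse = θ)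
    (hA : ∀ a, θ ≠ .atom a) (hB : θ ≠ .bot)
    (hO : ∀ φ ψ, θ ≠ .or φ ψ) (hI : ∀ φ ψ, θ ≠ .imp φ ψ)
    (hW : ∀ φ ψ, θ ≠ .wand φ ψ)
    (hE : θ = .emp → Δ₀ = .mempty) (hT : θ = .top → Δ₀ = .aempty)
    (hS : ∀ φ ψ, θ = .sep φ ψ → Δ₀ = .comma (.frml φ) (.frml ψ))
    (hN : ∀ φ ψ, θ = .and φ ψ → Δ₀ = .semic (.frml φ) (.frml ψ))
    {Δ : Bunch} {χ : Frml} (h : Proves Δ χ) :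
    Proves (bsub θ Δ₀ Δ) χ := by
  induction h with
  | ax a =>
      rw [bsub_frml_ne Δ₀ (fun hh => hA a hh.symm)]
      exact .ax a
  | equiv h he ih => exact .equiv ih (bequiv_sub he)
  | weaken C h ih =>
      rw [fill_sub] at ih ⊢
      exact .weaken (csub θ Δ₀ C) ih
  | contract C h ih =>
      rw [fill_sub] at ih ⊢
      exact .contract (csub θ Δ₀ C) ih
  | empR => exact .empR
  | empL C h ih =>
      rw [fill_sub] at ih ⊢
      by_cases he : θ = Frml.emp
      · rw [show bsub θ Δ₀ (.frml .emp) = Bunch.mempty by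
          rw [he] at hE ⊢; rw [bsub_frml_eq, hE rfl]]
        simpa [bsub] using ih
      · rw [bsub_frml_ne Δ₀ (fun hh => he hh.symm)]
        exact .empL _ (by simpa [bsub] using ih)
  | sepR h₁ h₂ ih₁ ih₂ => exact .sepR ih₁ ih₂
  | @sepL C φ' ψ' χ' h ih =>
      rw [fill_sub] at ih ⊢
      have ih' : Proves ((csub θ Δ₀ C).fill (.comma (.frml φ') (.frml ψ'))) χ' := by
        have step1 := unsub_leaf hcol
          ((csub θ Δ₀ C).comp (.commaL .hole (bsub θ Δ₀ (.frml ψ')))) φ'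
          (by rw [BCtx.fill_comp]; simpa [bsub, BCtx.fill] using ih)
        rw [BCtx.fill_comp] at step1
        have step2 := unsub_leaf hcol
          ((csub θ Δ₀ C).comp (.commaR (.frml φ') .hole)) ψ'
          (by rw [BCtx.fill_comp]; exact step1)
        rw [BCtx.fill_comp] at step2
        exact step2
      by_cases he : Frml.sep φ' ψ' = θ
      · rw [show bsub θ Δ₀ (.frml (.sep φ' ψ')) = Δ₀ by rw [← he, bsub_frml_eq]]
        rw [← hS φ' ψ' he.symm] at ih'
        exact ih'
      · rw [bsub_frml_ne Δ₀ he]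
        exact .sepL _ ih'
  | @wandR Δ' φ' ψ' h ih =>
      apply Proves.wandR
      exact unsub_leaf hcol (.commaR (bsub θ Δ₀ Δ') .hole) φ'
        (by simpa [bsub, BCtx.fill] using ih)
  | @wandL C Δ₁ Δ₂ φ' ψ' χ' h₁ h₂ ih₁ ih₂ =>
      rw [fill_sub] at ih₂ ⊢
      simp only [bsub]
      rw [if_neg (show ¬(Frml.wand φ' ψ' = θ) from fun hh => hW φ' ψ' hh.symm)]
      apply Proves.wandL (csub θ Δ₀ C) ih₁
      have := unsub_leaf hcol
        ((csub θ Δ₀ C).comp (.commaR (bsub θ Δ₀ Δ₂) .hole)) ψ'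
        (by rw [BCtx.fill_comp]; simpa [bsub, BCtx.fill] using ih₂)
      rw [BCtx.fill_comp] at this
      exact this
  | topR => exact .topR
  | topL C h ih =>
      rw [fill_sub] at ih ⊢
      by_cases he : θ = Frml.top
      · rw [show bsub θ Δ₀ (.frml .top) = Bunch.aempty by
          rw [he] at hT ⊢; rw [bsub_frml_eq, hT rfl]]
        simpa [bsub] using ih
      · rw [bsub_frml_ne Δ₀ (fun hh => he hh.symm)]
        exact .topL _ (by simpa [bsub] using ih)
  | andR h₁ h₂ ih₁ ih₂ => exact .andR ih₁ ih₂
  | @andL C φ' ψ' χ' h ih =>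
      rw [fill_sub] at ih ⊢
      have ih' : Proves ((csub θ Δ₀ C).fill (.semic (.frml φ') (.frml ψ'))) χ' := by
        have step1 := unsub_leaf hcol
          ((csub θ Δ₀ C).comp (.semicL .hole (bsub θ Δ₀ (.frml ψ')))) φ'
          (by rw [BCtx.fill_comp]; simpa [bsub, BCtx.fill] using ih)
        rw [BCtx.fill_comp] at step1
        have step2 := unsub_leaf hcol
          ((csub θ Δ₀ C).comp (.semicR (.frml φ') .hole)) ψ'
          (by rw [BCtx.fill_comp]; exact step1)
        rw [BCtx.fill_comp] at step2
        exact step2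
      by_cases he : Frml.and φ' ψ' = θ
      · rw [show bsub θ Δ₀ (.frml (.and φ' ψ')) = Δ₀ by rw [← he, bsub_frml_eq]]
        rw [← hN φ' ψ' he.symm] at ih'
        exact ih'
      · rw [bsub_frml_ne Δ₀ he]
        exact .andL _ ih'
  | @impR Δ' φ' ψ' h ih =>
      apply Proves.impR
      exact unsub_leaf hcol (.semicR (bsub θ Δ₀ Δ') .hole) φ'
        (by simpa [bsub, BCtx.fill] using ih)
  | @impL C Δ₁ Δ₂ φ' ψ' χ' h₁ h₂ ih₁ ih₂ =>
      rw [fill_sub] at ih₂ ⊢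
      simp only [bsub]
      rw [if_neg (show ¬(Frml.imp φ' ψ' = θ) from fun hh => hI φ' ψ' hh.symm)]
      apply Proves.impL (csub θ Δ₀ C) ih₁
      have := unsub_leaf hcol
        ((csub θ Δ₀ C).comp (.semicR (bsub θ Δ₀ Δ₂) .hole)) ψ'
        (by rw [BCtx.fill_comp]; simpa [bsub, BCtx.fill] using ih₂)
      rw [BCtx.fill_comp] at this
      exact this
  | botL C =>
      rw [fill_sub]
      rw [bsub_frml_ne Δ₀ (fun hh => hB hh.symm)]
      exact .botL _
  | orR1 h ih => exact .orR1 ih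
  | orR2 h ih => exact .orR2 ih
  | @orL C φ' ψ' χ' h₁ h₂ ih₁ ih₂ =>
      rw [fill_sub] at ih₁ ih₂ ⊢
      rw [bsub_frml_ne Δ₀ (fun hh => hO φ' ψ' hh.symm)]
      exact .orL _ (unsub_leaf hcol _ φ' ih₁) (unsub_leaf hcol _ ψ' ih₂)

/-- Undo a substitution on a bunch sitting in a context. -/
theorem restore {θ : Frml} {Δ₀ : Bunch} (hcol : Δ₀.collapse = θ) :
    ∀ (B : Bunch) (C : BCtx) {χ : Frml},
      Proves (C.fill (bsub θ Δ₀ B)) χ → Proves (C.fill B) χ := by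
  intro B
  induction B with
  | frml φ => intro C χ h; exact unsub_leaf hcol C φ h
  | mempty => intro C χ h; exact h
  | aempty => intro C χ h; exact h
  | comma B₁ B₂ ih₁ ih₂ =>
      intro C χ h
      have h1 := ih₁ (C.comp (.commaL .hole (bsub θ Δ₀ B₂)))
        (by rw [BCtx.fill_comp]; simpa [bsub, BCtx.fill] using h)
      rw [BCtx.fill_comp] at h1
      have h2 := ih₂ (C.comp (.commaR B₁ .hole))
        (by rw [BCtx.fill_comp]; exact h1)
      rw [BCtx.fill_comp] at h2
      exact h2
  | semic B₁ B₂ ih₁ ih₂ =>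
      intro C χ h
      have h1 := ih₁ (C.comp (.semicL .hole (bsub θ Δ₀ B₂)))
        (by rw [BCtx.fill_comp]; simpa [bsub, BCtx.fill] using h)
      rw [BCtx.fill_comp] at h1
      have h2 := ih₂ (C.comp (.semicR B₁ .hole))
        (by rw [BCtx.fill_comp]; exact h1)
      rw [BCtx.fill_comp] at h2
      exact h2

/-- Undo a substitution on a context. -/
theorem restoreC {θ : Frml} {Δ₀ : Bunch} (hcol : Δ₀.collapse = θ) :
    ∀ (C : BCtx) (D : BCtx) (E : Bunch) {χ : Frml},
      Proves (D.fill ((csub θ Δ₀ C).fill E)) χ → Proves (D.fill (C.fill E)) χ := by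
  intro C
  induction C with
  | hole => intro D E χ h; exact h
  | commaL C Γ ih =>
      intro D E χ h
      have h1 := restore hcol Γ (D.comp (.commaR ((csub θ Δ₀ C).fill E) .hole))
        (by rw [BCtx.fill_comp]; simpa [csub, BCtx.fill] using h)
      rw [BCtx.fill_comp] at h1
      have h2 := ih (D.comp (.commaL .hole Γ)) E
        (by rw [BCtx.fill_comp]; exact h1)
      rw [BCtx.fill_comp] at h2
      exact h2
  | commaR Γ C ih =>
      intro D E χ h
      have h1 := restore hcol Γ (D.comp (.commaL .hole ((csub θ Δ₀ C).fill E)))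
        (by rw [BCtx.fill_comp]; simpa [csub, BCtx.fill] using h)
      rw [BCtx.fill_comp] at h1
      have h2 := ih (D.comp (.commaR Γ .hole)) E
        (by rw [BCtx.fill_comp]; exact h1)
      rw [BCtx.fill_comp] at h2
      exact h2
  | semicL C Γ ih =>
      intro D E χ h
      have h1 := restore hcol Γ (D.comp (.semicR ((csub θ Δ₀ C).fill E) .hole))
        (by rw [BCtx.fill_comp]; simpa [csub, BCtx.fill] using h)
      rw [BCtx.fill_comp] at h1
      have h2 := ih (D.comp (.semicL .hole Γ)) E
        (by rw [BCtx.fill_comp]; exact h1)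
      rw [BCtx.fill_comp] at h2
      exact h2
  | semicR Γ C ih =>
      intro D E χ h
      have h1 := restore hcol Γ (D.comp (.semicL .hole ((csub θ Δ₀ C).fill E)))
        (by rw [BCtx.fill_comp]; simpa [csub, BCtx.fill] using h)
      rw [BCtx.fill_comp] at h1
      have h2 := ih (D.comp (.semicR Γ .hole)) E
        (by rw [BCtx.fill_comp]; exact h1)
      rw [BCtx.fill_comp] at h2
      exact h2

/-- Invertibility of the `-*R` rule. -/
theorem wandR_inv {Δ : Bunch} {φ ψ : Frml} (h : Proves Δ (.wand φ ψ)) :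
    Proves (.comma Δ (.frml φ)) ψ := by
  generalize hχ : Frml.wand φ ψ = χ at h
  induction h with
  | ax a => exact absurd hχ (by simp)
  | equiv h he ih =>
      exact .equiv (ih hχ) (.ctx (.commaL .hole (.frml φ)) he)
  | weaken C h ih => exact .weaken (.commaL C (.frml φ)) (ih hχ)
  | contract C h ih => exact .contract (.commaL C (.frml φ)) (ih hχ)
  | empR => exact absurd hχ (by simp)
  | empL C h ih => exact .empL (.commaL C (.frml φ)) (ih hχ)
  | sepR h₁ h₂ ih₁ ih₂ => exact absurd hχ (by simp)
  | sepL C h ih => exact .sepL (.commaL C (.frml φ)) (ih hχ)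
  | wandR h ih =>
      cases hχ
      exact h
  | wandL C h₁ h₂ ih₁ ih₂ => exact .wandL (.commaL C (.frml φ)) h₁ (ih₂ hχ)
  | topR => exact absurd hχ (by simp)
  | topL C h ih => exact .topL (.commaL C (.frml φ)) (ih hχ)
  | andR h₁ h₂ ih₁ ih₂ => exact absurd hχ (by simp)
  | andL C h ih => exact .andL (.commaL C (.frml φ)) (ih hχ)
  | impR h ih => exact absurd hχ (by simp)
  | impL C h₁ h₂ ih₁ ih₂ => exact .impL (.commaL C (.frml φ)) h₁ (ih₂ hχ)
  | botL C => exact .botL (.commaL C (.frml φ))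
  | orR1 h ih => exact absurd hχ (by simp)
  | orR2 h ih => exact absurd hχ (by simp)
  | orL C h₁ h₂ ih₁ ih₂ => exact .orL (.commaL C (.frml φ)) (ih₁ hχ) (ih₂ hχ)

/-- The admissible collapse rule: a formula collapse on the left may be
expanded back into the bunch. -/
theorem expand : ∀ (Δ : Bunch) (C : BCtx) {χ : Frml},
    Proves (C.fill (.frml Δ.collapse)) χ → Proves (C.fill Δ) χ := by
  intro Δ
  induction Δ with
  | frml φ => intro C χ h; exact h
  | mempty =>
      intro C χ h
      simp only [Bunch.collapse] at h
      have hs := subst_proves (θ := Frml.emp) (Δ₀ := Bunch.mempty) rfl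
        (by simp) (by simp) (by simp) (by simp) (by simp)
        (fun _ => rfl) (by simp) (by simp) (by simp) h
      rw [fill_sub, bsub_frml_eq] at hs
      exact restoreC (θ := Frml.emp) (Δ₀ := Bunch.mempty) rfl C .hole .mempty hs
  | aempty =>
      intro C χ h
      simp only [Bunch.collapse] at h
      have hs := subst_proves (θ := Frml.top) (Δ₀ := Bunch.aempty) rfl
        (by simp) (by simp) (by simp) (by simp) (by simp)
        (by simp) (fun _ => rfl) (by simp) (by simp) h
      rw [fill_sub, bsub_frml_eq] at hs
      exact restoreC (θ := Frml.top) (Δ₀ := Bunch.aempty) rfl C .hole .aempty hs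
  | comma Δ₁ Δ₂ ih₁ ih₂ =>
      intro C χ h
      simp only [Bunch.collapse] at h
      have hs := subst_proves (θ := Frml.sep Δ₁.collapse Δ₂.collapse)
        (Δ₀ := Bunch.comma (.frml Δ₁.collapse) (.frml Δ₂.collapse)) rfl
        (by simp) (by simp) (by simp) (by simp) (by simp)
        (by simp) (by simp)
        (by intro φ' ψ' hh; rw [Frml.sep.injEq] at hh; rw [hh.1, hh.2]) (by simp) h
      rw [fill_sub, bsub_frml_eq] at hs
      have h0 := restoreC (θ := Frml.sep Δ₁.collapse Δ₂.collapse)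
        (Δ₀ := Bunch.comma (.frml Δ₁.collapse) (.frml Δ₂.collapse)) rfl
        C .hole (.comma (.frml Δ₁.collapse) (.frml Δ₂.collapse)) hs
      simp only [BCtx.fill] at h0
      have h1 := ih₁ (C.comp (.commaL .hole (.frml Δ₂.collapse)))
        (by rw [BCtx.fill_comp]; exact h0)
      rw [BCtx.fill_comp] at h1
      have h2 := ih₂ (C.comp (.commaR Δ₁ .hole))
        (by rw [BCtx.fill_comp]; exact h1)
      rw [BCtx.fill_comp] at h2
      exact h2
  | semic Δ₁ Δ₂ ih₁ ih₂ =>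
      intro C χ h
      simp only [Bunch.collapse] at h
      have hs := subst_proves (θ := Frml.and Δ₁.collapse Δ₂.collapse)
        (Δ₀ := Bunch.semic (.frml Δ₁.collapse) (.frml Δ₂.collapse)) rfl
        (by simp) (by simp) (by simp) (by simp) (by simp)
        (by simp) (by simp) (by simp)
        (by intro φ' ψ' hh; rw [Frml.and.injEq] at hh; rw [hh.1, hh.2]) h
      rw [fill_sub, bsub_frml_eq] at hs
      have h0 := restoreC (θ := Frml.and Δ₁.collapse Δ₂.collapse)
        (Δ₀ := Bunch.semic (.frml Δ₁.collapse) (.frml Δ₂.collapse)) rfl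
        C .hole (.semic (.frml Δ₁.collapse) (.frml Δ₂.collapse)) hs
      simp only [BCtx.fill] at h0
      have h1 := ih₁ (C.comp (.semicL .hole (.frml Δ₂.collapse)))
        (by rw [BCtx.fill_comp]; exact h0)
      rw [BCtx.fill_comp] at h1
      have h2 := ih₂ (C.comp (.semicR Δ₁ .hole))
        (by rw [BCtx.fill_comp]; exact h1)
      rw [BCtx.fill_comp] at h2
      exact h2


theorem wand_mem_iff (Δ Δ' : Bunch) (ψ : Frml) :
    Proves Δ (.wand Δ'.collapse ψ) ↔ Proves (.comma Δ Δ') ψ := by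
  constructor
  · intro h
    exact expand Δ' (.commaR Δ .hole) (wandR_inv h)
  · intro h
    exact .wandR (collapseL Δ' (.commaR Δ .hole) h)

theorem wand_closed_key (X Y : Set Bunch) (J : Type) (φ : J → Frml)
    (hYJ : Y = ⋂ j : J, pr (φ j)) :
    wandSet X Y = ⋂ (Δ' : X) (j : J), pr (.wand (Bunch.collapse Δ'.1) (φ j)) := by
  ext Δ
  simp only [wandSet, Set.mem_setOf_eq, Set.mem_iInter, hYJ, pr, Subtype.forall]
  constructor
  · intro h Δ' hΔ' j
    exact (wand_mem_iff Δ Δ' (φ j)).2 (h Δ' hΔ' j)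
  · intro h Δ' hΔ' j
    exact (wand_mem_iff Δ Δ' (φ j)).1 (h Δ' hΔ' j)

theorem subset_clB (W : Set Bunch) : W ⊆ clB W := by
  intro Δ hΔ
  intro S hS
  obtain ⟨ψ, rfl, hWS⟩ := hS
  exact hWS hΔ

/-- if `Y` is closed then `X —• Y` is closed; moreover, writing
`Y = ⋂ⱼ ⟦φⱼ⟧`, one has `X —• Y = ⋂_{(Δ',j)} ⟦⟨Δ'⟩ -* φⱼ⟧`. -/
theorem wand_is_closed (X Y : Set Bunch) (hY : ClosedB Y) :
    ClosedB (wandSet X Y) ∧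
    ∀ (J : Type) (φ : J → Frml), Y = ⋂ j : J, pr (φ j) →
      wandSet X Y = ⋂ (Δ' : X) (j : J), pr (.wand (Bunch.collapse Δ'.1) (φ j)) := by
  refine ⟨?_, fun J φ hYJ => wand_closed_key X Y J φ hYJ⟩
  -- Y is an intersection of principal sets since it is closed
  set J : Type := {ψ : Frml // Y ⊆ pr ψ} with hJ
  have hYJ : Y = ⋂ j : J, pr j.1 := by
    conv_lhs => rw [← hY]
    ext Δ
    simp only [clB, Set.mem_sInter, Set.mem_setOf_eq, Set.mem_iInter]
    constructor
    · intro h j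
      exact h (pr j.1) ⟨j.1, rfl, j.2⟩
    · intro h S hS
      obtain ⟨ψ, rfl, hψ⟩ := hS
      exact h ⟨ψ, hψ⟩
  have hkey := wand_closed_key X Y J (fun j => j.1) hYJ
  apply Set.Subset.antisymm
  · intro Δ hΔ
    rw [hkey]
    simp only [Set.mem_iInter]
    intro Δ' j
    have hsub : wandSet X Y ⊆ pr (.wand (Bunch.collapse Δ'.1) j.1) := by
      rw [hkey]
      intro Γ hΓ
      simp only [Set.mem_iInter] at hΓ
      exact hΓ Δ' j
    exact hΔ _ ⟨_, rfl, hsub⟩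
  · exact subset_clB _
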